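/- For a discretized Brownian bridge with round trip d = 0 (start and end both at the origin), uniform grid with n ≥ 2 points, diffusion coefficient σ_m > 0 and total time T > 0, the expected path length equals σ_m·√((π/2)·T(n-1)). -/

import Mathlib

open MeasureTheory ProbabilityTheory Real

/-- `W` is a standard one-dimensional Brownian motion under `P`. -/
def IsStdBrownian {Ω : Type*} [MeasurableSpace Ω] (P : Measure Ω) (W : ℝ → Ω → ℝ) : Prop :=
  (∀ t, Measurable (W t)) ∧
  (∀ᵐ ω ∂P, W 0 ω = 0) ∧
  (∀ s t : ℝ, 0 ≤ s → s ≤ t →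
    Measure.map (fun ω => W t ω - W s ω) P = gaussianReal 0 (t - s).toNNReal) ∧
  (∀ n : ℕ, ∀ t : Fin (n + 1) → ℝ, Monotone t → (∀ i, 0 ≤ t i) →
    iIndepFun
      (fun (i : Fin n) ω => W (t i.succ) ω - W (t i.castSucc) ω) P) ∧
  (∀ᵐ ω ∂P, Continuous fun t => W t ω)

namespace RoundTripAux

open Set
open scoped ENNReal NNReal

lemma gauss_mul_eq {a b : ℝ≥0} (ha : a ≠ 0) (hb : b ≠ 0) (y x : ℝ) :
    gaussianPDFReal 0 a x * gaussianPDFReal x b y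
      = (gaussianPDFReal 0 (a + b) y
            * (Real.sqrt (π / (((a : ℝ) + (b : ℝ)) / (2 * (a : ℝ) * (b : ℝ)))))⁻¹)
        * Real.exp (-((((a : ℝ) + (b : ℝ)) / (2 * (a : ℝ) * (b : ℝ))))
            * (x - (a : ℝ) * y / ((a : ℝ) + (b : ℝ)))^2) := by
  have hA : 0 < (a : ℝ) := by positivity
  have hB : 0 < (b : ℝ) := by positivity
  set A := (a : ℝ)
  set B := (b : ℝ)
  have hk : 0 < (A + B) / (2 * A * B) := by positivity
  unfold gaussianPDFReal
  push_cast
  have hconst : (Real.sqrt (2 * π * A))⁻¹ * (Real.sqrt (2 * π * B))⁻¹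
      = (Real.sqrt (2 * π * (A + B)))⁻¹ * (Real.sqrt (π / ((A + B) / (2 * A * B))))⁻¹ := by
    rw [← mul_inv, ← mul_inv, ← Real.sqrt_mul (by positivity), ← Real.sqrt_mul (by positivity)]
    congr 2
    field_simp
  have hexp : Real.exp (-(x - 0)^2 / (2 * A)) * Real.exp (-(y - x)^2 / (2 * B))
      = Real.exp (-(y - 0)^2 / (2 * (A + B)))
        * Real.exp (-((A + B) / (2 * A * B)) * (x - A * y / (A + B))^2) := by
    rw [← Real.exp_add, ← Real.exp_add]
    congr 1
    field_simp
    ring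
  calc (Real.sqrt (2 * π * A))⁻¹ * Real.exp (-(x - 0)^2 / (2 * A))
        * ((Real.sqrt (2 * π * B))⁻¹ * Real.exp (-(y - x)^2 / (2 * B)))
      = ((Real.sqrt (2 * π * A))⁻¹ * (Real.sqrt (2 * π * B))⁻¹)
        * (Real.exp (-(x - 0)^2 / (2 * A)) * Real.exp (-(y - x)^2 / (2 * B))) := by ring
    _ = ((Real.sqrt (2 * π * (A + B)))⁻¹ * (Real.sqrt (π / ((A + B) / (2 * A * B))))⁻¹)
        * (Real.exp (-(y - 0)^2 / (2 * (A + B)))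
          * Real.exp (-((A + B) / (2 * A * B)) * (x - A * y / (A + B))^2)) := by
        rw [hconst, hexp]
    _ = _ := by ring

lemma integrable_gauss_mul {a b : ℝ≥0} (ha : a ≠ 0) (hb : b ≠ 0) (y : ℝ) :
    Integrable (fun x => gaussianPDFReal 0 a x * gaussianPDFReal x b y) := by
  have hA : 0 < (a : ℝ) := by positivity
  have hB : 0 < (b : ℝ) := by positivity
  have hk : 0 < ((a : ℝ) + (b : ℝ)) / (2 * (a : ℝ) * (b : ℝ)) := by positivity
  simp only [gauss_mul_eq ha hb y]
  exact ((integrable_exp_neg_mul_sq hk).comp_sub_right _).const_mul _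

lemma integral_gauss_mul {a b : ℝ≥0} (ha : a ≠ 0) (hb : b ≠ 0) (y : ℝ) :
    ∫ x, gaussianPDFReal 0 a x * gaussianPDFReal x b y = gaussianPDFReal 0 (a + b) y := by
  have hA : 0 < (a : ℝ) := by positivity
  have hB : 0 < (b : ℝ) := by positivity
  have hk : 0 < ((a : ℝ) + (b : ℝ)) / (2 * (a : ℝ) * (b : ℝ)) := by positivity
  simp only [gauss_mul_eq ha hb y]
  rw [MeasureTheory.integral_const_mul]
  have : ∫ x : ℝ, Real.exp (-(((a : ℝ) + (b : ℝ)) / (2 * (a : ℝ) * (b : ℝ)))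
      * (x - (a : ℝ) * y / ((a : ℝ) + (b : ℝ)))^2)
      = Real.sqrt (π / (((a : ℝ) + (b : ℝ)) / (2 * (a : ℝ) * (b : ℝ)))) := by
    rw [← integral_gaussian]
    exact integral_sub_right_eq_self
      (fun x => Real.exp (-(((a : ℝ) + (b : ℝ)) / (2 * (a : ℝ) * (b : ℝ))) * x^2)) _
  rw [this, mul_assoc, inv_mul_cancel₀ (by positivity), mul_one]


lemma gaussianPDFReal_shift (b : ℝ≥0) (x y : ℝ) :
    gaussianPDFReal x b y = gaussianPDFReal 0 b (y - x) := by
  simp [gaussianPDFReal]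

lemma measurable_pdf2 (b : ℝ≥0) : Measurable fun p : ℝ × ℝ => gaussianPDF p.1 b p.2 := by
  have h : (fun p : ℝ × ℝ => gaussianPDF p.1 b p.2)
      = fun p : ℝ × ℝ => ENNReal.ofReal (gaussianPDFReal 0 b (p.2 - p.1)) := by
    funext p
    rw [show gaussianPDF p.1 b p.2 = ENNReal.ofReal (gaussianPDFReal p.1 b p.2) from rfl,
      gaussianPDFReal_shift]
  rw [h]
  exact ((measurable_gaussianPDFReal 0 b).comp (measurable_snd.sub measurable_fst)).ennreal_ofReal

lemma map_add_gaussian_prod (a b : ℝ≥0) :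
    Measure.map (fun p : ℝ × ℝ => p.1 + p.2) ((gaussianReal 0 a).prod (gaussianReal 0 b))
      = gaussianReal 0 (a + b) := by
  rcases eq_or_ne a 0 with rfl | ha
  · rw [gaussianReal_zero_var, Measure.dirac_prod,
      Measure.map_map measurable_add measurable_prodMk_left]
    simp only [Function.comp_def, zero_add]
    rw [Measure.map_id']
  rcases eq_or_ne b 0 with rfl | hb
  · rw [gaussianReal_zero_var, Measure.prod_dirac,
      Measure.map_map measurable_add measurable_prodMk_right]
    simp only [Function.comp_def, add_zero]
    rw [Measure.map_id']
  have hab : a + b ≠ 0 := by simp [ha]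
  ext s hs
  rw [Measure.map_apply measurable_add hs, Measure.prod_apply (measurable_add hs)]
  have hpre : ∀ x : ℝ, Prod.mk x ⁻¹' ((fun p : ℝ × ℝ => p.1 + p.2) ⁻¹' s)
      = (fun y => x + y) ⁻¹' s := fun x => rfl
  have hmapb : ∀ x : ℝ, gaussianReal 0 b (Prod.mk x ⁻¹' ((fun p : ℝ × ℝ => p.1 + p.2) ⁻¹' s))
      = ∫⁻ y in s, gaussianPDF x b y := by
    intro x
    rw [hpre x, ← Measure.map_apply (measurable_const_add x) hs,
      gaussianReal_map_const_add, zero_add, gaussianReal_apply _ hb]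
  simp_rw [hmapb]
  have hmeas_unc : Measurable fun p : ℝ × ℝ => s.indicator (fun y => gaussianPDF p.1 b y) p.2 := by
    have : (fun p : ℝ × ℝ => s.indicator (fun y => gaussianPDF p.1 b y) p.2)
        = fun p : ℝ × ℝ => s.indicator (fun _ => (1 : ℝ≥0∞)) p.2 * gaussianPDF p.1 b p.2 := by
      funext p
      by_cases h : p.2 ∈ s <;> simp [h]
    rw [this]
    exact ((measurable_const.indicator hs).comp measurable_snd).mul (measurable_pdf2 b)
  have hmeas_g : Measurable fun x : ℝ => ∫⁻ y in s, gaussianPDF x b y := by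
    simp_rw [← lintegral_indicator hs]
    exact Measurable.lintegral_prod_right (f := fun x y => s.indicator (fun y => gaussianPDF x b y) y)
      hmeas_unc
  rw [gaussianReal_of_var_ne_zero 0 ha,
    lintegral_withDensity_eq_lintegral_mul _ (measurable_gaussianPDF 0 a) hmeas_g]
  simp only [Pi.mul_apply]
  have hpull : ∀ x : ℝ, gaussianPDF 0 a x * ∫⁻ y in s, gaussianPDF x b y
      = ∫⁻ y in s, gaussianPDF 0 a x * gaussianPDF x b y := by
    intro x
    rw [← lintegral_const_mul _ (measurable_gaussianPDF x b)]
  simp_rw [hpull]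
  rw [lintegral_lintegral_swap]
  swap
  · exact (((measurable_gaussianPDF 0 a).comp measurable_fst).mul (measurable_pdf2 b)).aemeasurable
  have hinner : ∀ y : ℝ, ∫⁻ x, gaussianPDF 0 a x * gaussianPDF x b y
      = gaussianPDF 0 (a + b) y := by
    intro y
    have : ∀ x : ℝ, gaussianPDF 0 a x * gaussianPDF x b y
        = ENNReal.ofReal (gaussianPDFReal 0 a x * gaussianPDFReal x b y) := by
      intro x
      rw [ENNReal.ofReal_mul (gaussianPDFReal_nonneg 0 a x)]
      rfl
    simp_rw [this]
    rw [← ofReal_integral_eq_lintegral_ofReal (integrable_gauss_mul ha hb y)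
      (Filter.Eventually.of_forall fun x =>
        mul_nonneg (gaussianPDFReal_nonneg 0 a x) (gaussianPDFReal_nonneg x b y)),
      integral_gauss_mul ha hb y]
    rfl
  simp_rw [hinner]
  rw [← gaussianReal_apply 0 hab s]


variable {Ω : Type*} [MeasurableSpace Ω]

lemma map_add_of_indepFun (P : Measure Ω) [IsProbabilityMeasure P] {U V : Ω → ℝ}
    (hU : Measurable U) (hV : Measurable V) (h : IndepFun U V P) {a b : ℝ≥0}
    (hU' : Measure.map U P = gaussianReal 0 a) (hV' : Measure.map V P = gaussianReal 0 b) :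
    Measure.map (fun ω => U ω + V ω) P = gaussianReal 0 (a + b) := by
  have hpair := (indepFun_iff_map_prod_eq_prod_map_map hU.aemeasurable hV.aemeasurable).mp h
  have hcomp : (fun ω => U ω + V ω)
      = (fun p : ℝ × ℝ => p.1 + p.2) ∘ fun ω => (U ω, V ω) := rfl
  rw [hcomp, ← Measure.map_map measurable_add (hU.prodMk hV), hpair, hU', hV',
    map_add_gaussian_prod]

lemma map_const_mul_of_map (P : Measure Ω) {U : Ω → ℝ} (hU : Measurable U) {v : ℝ≥0}
    (hU' : Measure.map U P = gaussianReal 0 v) (c : ℝ) :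
    Measure.map (fun ω => c * U ω) P = gaussianReal 0 (⟨c^2, sq_nonneg c⟩ * v) := by
  have hcomp : (fun ω => c * U ω) = (fun x => c * x) ∘ U := rfl
  rw [hcomp, ← Measure.map_map (measurable_const_mul c) hU, hU',
    gaussianReal_map_const_mul c, mul_zero]
  rfl

/-- Law of the Brownian bridge increment. -/
lemma law_bridge_incr (P : Measure Ω) [IsProbabilityMeasure P] {W : ℝ → Ω → ℝ}
    (hW : IsStdBrownian P W) {T s t : ℝ} (hT : 0 < T) (hs : 0 ≤ s) (hst : s ≤ t) (htT : t ≤ T) :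
    Measure.map (fun ω => (W t ω - W s ω) - ((t - s) / T) * W T ω) P
      = gaussianReal 0 ((t - s) * (T - (t - s)) / T).toNNReal := by
  obtain ⟨hWm, hW0, hWlaw, hWind, -⟩ := hW
  set c : ℝ := (t - s) / T with hc
  set v : Fin 4 → ℝ := ![0, s, t, T] with hv
  have hv0 : v 0 = 0 := rfl
  have hv1 : v 1 = s := rfl
  have hv2 : v 2 = t := rfl
  have hv3 : v 3 = T := rfl
  have hmono : Monotone v := by
    intro i j hij
    fin_cases i <;> fin_cases j <;>
      simp_all [hv] <;> first | linarith | (exfalso; omega)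
  have hnn : ∀ i, 0 ≤ v i := by
    intro i; fin_cases i <;> simp [hv] <;> linarith
  have hind := hWind 3 v hmono hnn
  set f : Fin 3 → Ω → ℝ := fun i ω => W (v i.succ) ω - W (v i.castSucc) ω with hf
  have hfm : ∀ i, Measurable (f i) := fun i => (hWm _).sub (hWm _)
  have hf0 : f 0 = fun ω => W s ω - W 0 ω := rfl
  have hf1 : f 1 = fun ω => W t ω - W s ω := rfl
  have hf2 : f 2 = fun ω => W T ω - W t ω := rfl
  -- laws of the three increments
  have hl0 : Measure.map (f 0) P = gaussianReal 0 (s - 0).toNNReal := by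
    rw [hf0]; exact hWlaw 0 s le_rfl hs
  have hl1 : Measure.map (f 1) P = gaussianReal 0 (t - s).toNNReal := by
    rw [hf1]; exact hWlaw s t hs hst
  have hl2 : Measure.map (f 2) P = gaussianReal 0 (T - t).toNNReal := by
    rw [hf2]; exact hWlaw t T (hs.trans hst) htT
  -- independence
  have hind12 : IndepFun (fun ω => (1 - c) * f 1 ω) (fun ω => (-c) * f 2 ω) P :=
    (hind.indepFun (by decide : (1 : Fin 3) ≠ 2)).comp
      (measurable_const_mul (1 - c)) (measurable_const_mul (-c))
  have hmap12 : Measure.map (fun ω => (1 - c) * f 1 ω + (-c) * f 2 ω) P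
      = gaussianReal 0 (⟨(1 - c)^2, sq_nonneg _⟩ * (t - s).toNNReal
          + ⟨(-c)^2, sq_nonneg _⟩ * (T - t).toNNReal) :=
    map_add_of_indepFun P ((hfm 1).const_mul _) ((hfm 2).const_mul _) hind12
      (map_const_mul_of_map P (hfm 1) hl1 _) (map_const_mul_of_map P (hfm 2) hl2 _)
  have hindp : IndepFun (fun ω => (1 - c) * f 1 ω + (-c) * f 2 ω) (fun ω => (-c) * f 0 ω) P := by
    have h := hind.indepFun_prodMk hfm 1 2 0 (by decide) (by decide)
    exact h.comp (φ := fun p : ℝ × ℝ => (1 - c) * p.1 + (-c) * p.2)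
      ((measurable_fst.const_mul _).add (measurable_snd.const_mul _))
      (measurable_const_mul (-c))
  have hmapT : Measure.map
      (fun ω => ((1 - c) * f 1 ω + (-c) * f 2 ω) + (-c) * f 0 ω) P
      = gaussianReal 0 ((⟨(1 - c)^2, sq_nonneg _⟩ * (t - s).toNNReal
          + ⟨(-c)^2, sq_nonneg _⟩ * (T - t).toNNReal)
          + ⟨(-c)^2, sq_nonneg _⟩ * (s - 0).toNNReal) :=
    map_add_of_indepFun P (((hfm 1).const_mul _).add ((hfm 2).const_mul _))
      ((hfm 0).const_mul _) hindp hmap12 (map_const_mul_of_map P (hfm 0) hl0 _)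
  -- a.e. equality
  have hae : (fun ω => ((1 - c) * f 1 ω + (-c) * f 2 ω) + (-c) * f 0 ω)
      =ᵐ[P] fun ω => (W t ω - W s ω) - ((t - s) / T) * W T ω := by
    filter_upwards [hW0] with ω h0
    have e0 : f 0 ω = W s ω - W 0 ω := rfl
    have e1 : f 1 ω = W t ω - W s ω := rfl
    have e2 : f 2 ω = W T ω - W t ω := rfl
    simp only [e0, e1, e2, h0, hc]
    ring
  rw [← Measure.map_congr hae, hmapT]
  congr 1
  -- NNReal arithmetic
  have hTne : T ≠ 0 := ne_of_gt hT
  have h1 : (0:ℝ) ≤ t - s := by linarith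
  have h2 : (0:ℝ) ≤ T - t := by linarith
  have h3 : (0:ℝ) ≤ s - 0 := by linarith
  have h4 : (0:ℝ) ≤ (t - s) * (T - (t - s)) / T := by
    apply div_nonneg _ hT.le
    apply mul_nonneg h1
    nlinarith
  show NNReal.mk ((1 - c)^2) (sq_nonneg _) * (t - s).toNNReal
    + NNReal.mk ((-c)^2) (sq_nonneg _) * (T - t).toNNReal
    + NNReal.mk ((-c)^2) (sq_nonneg _) * (s - 0).toNNReal = _
  apply NNReal.coe_injective
  push_cast [Real.coe_toNNReal _ h1, Real.coe_toNNReal _ h2, Real.coe_toNNReal _ h3,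
    Real.coe_toNNReal _ h4]
  simp only [hc]
  rw [eq_div_iff hTne]
  field_simp
  ring


variable {v : ℝ≥0}

noncomputable def rho (v : ℝ≥0) : ℝ → ℝ≥0 := fun x => Real.toNNReal (gaussianPDFReal 0 v x)

lemma measurable_rho (v : ℝ≥0) : Measurable (rho v) :=
  (measurable_gaussianPDFReal 0 v).real_toNNReal

lemma coe_rho (v : ℝ≥0) (x : ℝ) : (rho v x : ℝ) = gaussianPDFReal 0 v x :=
  Real.coe_toNNReal _ (gaussianPDFReal_nonneg 0 v x)

lemma withDensity_rho (hv : v ≠ 0) :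
    gaussianReal 0 v = volume.withDensity (fun x => (rho v x : ℝ≥0∞)) := by
  rw [gaussianReal_of_var_ne_zero 0 hv]
  rfl

lemma integral_gauss_eq (hv : v ≠ 0) (g : ℝ → ℝ) :
    ∫ x, g x ∂(gaussianReal 0 v) = ∫ x, gaussianPDFReal 0 v x * g x := by
  rw [withDensity_rho hv, integral_withDensity_eq_integral_smul (measurable_rho v)]
  congr 1
  funext x
  rw [NNReal.smul_def, smul_eq_mul, coe_rho]

lemma pdf_eq (v : ℝ≥0) (x : ℝ) :
    gaussianPDFReal 0 v x = (Real.sqrt (2 * π * v))⁻¹ * Real.exp (-((2 * (v:ℝ))⁻¹ * x ^ 2)) := by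
  unfold gaussianPDFReal
  congr 1
  rw [sub_zero]
  by_cases h : (v:ℝ) = 0
  · simp [h]
  · field_simp

lemma integrable_abs_mul_pdf (hv : v ≠ 0) :
    Integrable (fun x => |x| * gaussianPDFReal 0 v x) := by
  have hb : 0 < (2 * (v:ℝ))⁻¹ := by
    have : 0 < (v:ℝ) := by positivity
    positivity
  have h := ((integrable_mul_exp_neg_mul_sq hb).abs).const_mul (Real.sqrt (2 * π * v))⁻¹
  refine h.congr ?_
  filter_upwards with x
  rw [pdf_eq]
  rw [abs_mul, abs_of_nonneg (Real.exp_nonneg _)]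
  ring

lemma integrable_pdf (v : ℝ≥0) : Integrable (gaussianPDFReal 0 v) := integrable_gaussianPDFReal 0 v

/-- Integrability of the norm against the 2D product Gaussian. -/
lemma integrable_norm_prod (hv : v ≠ 0) :
    Integrable (fun p : ℝ × ℝ => Real.sqrt (p.1 ^ 2 + p.2 ^ 2))
      ((gaussianReal 0 v).prod (gaussianReal 0 v)) := by
  have habs : Integrable (fun x : ℝ => |x|) (gaussianReal 0 v) := by
    rw [withDensity_rho hv, integrable_withDensity_iff_integrable_smul (measurable_rho v)]
    refine (integrable_abs_mul_pdf hv).congr ?_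
    filter_upwards with x
    rw [NNReal.smul_def, smul_eq_mul, coe_rho]
    ring
  have hone : Integrable (fun _ : ℝ => (1:ℝ)) (gaussianReal 0 v) := integrable_const 1
  have h1 : Integrable (fun p : ℝ × ℝ => |p.1| * 1)
      ((gaussianReal 0 v).prod (gaussianReal 0 v)) := habs.mul_prod hone
  have h2 : Integrable (fun p : ℝ × ℝ => 1 * |p.2|)
      ((gaussianReal 0 v).prod (gaussianReal 0 v)) := hone.mul_prod habs
  have hbound : Integrable (fun p : ℝ × ℝ => |p.1| * 1 + 1 * |p.2|)
      ((gaussianReal 0 v).prod (gaussianReal 0 v)) := h1.add h2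
  refine hbound.mono ?_ ?_
  · exact (Real.continuous_sqrt.comp (by fun_prop)).aestronglyMeasurable
  · filter_upwards with p
    have h3 : Real.sqrt (p.1 ^ 2 + p.2 ^ 2) ≤ |p.1| + |p.2| := by
      rw [← Real.sqrt_sq (by positivity : (0:ℝ) ≤ |p.1| + |p.2|)]
      apply Real.sqrt_le_sqrt
      nlinarith [sq_abs p.1, sq_abs p.2, abs_nonneg p.1, abs_nonneg p.2]
    rw [Real.norm_eq_abs, Real.norm_eq_abs, abs_of_nonneg (Real.sqrt_nonneg _),
      abs_of_nonneg (by positivity : (0:ℝ) ≤ |p.1| * 1 + 1 * |p.2|)]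
    simpa using h3

lemma integrable_g (hv : v ≠ 0) :
    Integrable (fun p : ℝ × ℝ =>
      gaussianPDFReal 0 v p.1 * (gaussianPDFReal 0 v p.2 * Real.sqrt (p.1 ^ 2 + p.2 ^ 2)))
      (volume.prod volume) := by
  have h1 : Integrable (fun p : ℝ × ℝ => (|p.1| * gaussianPDFReal 0 v p.1) * gaussianPDFReal 0 v p.2)
      (volume.prod volume) := (integrable_abs_mul_pdf hv).mul_prod (integrable_pdf v)
  have h2 : Integrable (fun p : ℝ × ℝ => gaussianPDFReal 0 v p.1 * (|p.2| * gaussianPDFReal 0 v p.2))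
      (volume.prod volume) := (integrable_pdf v).mul_prod (integrable_abs_mul_pdf hv)
  refine (h1.add h2).mono ?_ ?_
  · apply AEStronglyMeasurable.mul
    · exact ((measurable_gaussianPDFReal 0 v).comp measurable_fst).aestronglyMeasurable
    apply AEStronglyMeasurable.mul
    · exact ((measurable_gaussianPDFReal 0 v).comp measurable_snd).aestronglyMeasurable
    · exact (Real.continuous_sqrt.comp (by fun_prop)).aestronglyMeasurable
  · filter_upwards with p
    simp only [Pi.add_apply]
    have hnn1 := gaussianPDFReal_nonneg 0 v p.1
    have hnn2 := gaussianPDFReal_nonneg 0 v p.2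
    have h3 : Real.sqrt (p.1 ^ 2 + p.2 ^ 2) ≤ |p.1| + |p.2| := by
      rw [← Real.sqrt_sq (by positivity : (0:ℝ) ≤ |p.1| + |p.2|)]
      apply Real.sqrt_le_sqrt
      nlinarith [sq_abs p.1, sq_abs p.2, abs_nonneg p.1, abs_nonneg p.2]
    rw [Real.norm_eq_abs, Real.norm_eq_abs,
      abs_of_nonneg (by positivity : (0:ℝ) ≤ gaussianPDFReal 0 v p.1 *
        (gaussianPDFReal 0 v p.2 * Real.sqrt (p.1 ^ 2 + p.2 ^ 2))),
      abs_of_nonneg (by positivity : (0:ℝ) ≤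
        |p.1| * gaussianPDFReal 0 v p.1 * gaussianPDFReal 0 v p.2 +
        gaussianPDFReal 0 v p.1 * (|p.2| * gaussianPDFReal 0 v p.2))]
    nlinarith [mul_nonneg hnn1 hnn2, mul_le_mul_of_nonneg_left h3 (mul_nonneg hnn1 hnn2)]

/-- the radial integral. -/
lemma radial_integral {b : ℝ} (hb : 0 < b) :
    ∫ r in Ioi (0:ℝ), r ^ 2 * Real.exp (-(b * r ^ 2))
      = 1 / 2 * (1 / b) ^ ((3:ℝ)/2) * (Real.sqrt π / 2) := by
  have key := integral_comp_rpow_Ioi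
    (fun u => 1 / 2 * (u ^ ((1:ℝ)/2) * Real.exp (-(b * u)))) (p := 2) two_ne_zero
  have hcongr : ∫ x in Ioi (0:ℝ), (|2| * x ^ ((2:ℝ) - 1)) •
      (fun u => 1 / 2 * (u ^ ((1:ℝ)/2) * Real.exp (-(b * u)))) (x ^ (2:ℝ))
      = ∫ r in Ioi (0:ℝ), r ^ 2 * Real.exp (-(b * r ^ 2)) := by
    apply setIntegral_congr_fun measurableSet_Ioi
    intro x hx
    have hx' : (0:ℝ) < x := hx
    have h2 : x ^ (2:ℝ) = x ^ 2 := by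
      rw [show (2:ℝ) = ((2:ℕ):ℝ) by norm_num, Real.rpow_natCast]
    have h1 : x ^ ((2:ℝ) - 1) = x := by
      norm_num
    have hsq : ((x ^ 2 : ℝ)) ^ ((1:ℝ)/2) = x := by
      rw [← Real.sqrt_eq_rpow, Real.sqrt_sq hx'.le]
    simp only [smul_eq_mul, h2, h1, hsq]
    rw [abs_of_nonneg (by norm_num : (0:ℝ) ≤ 2)]
    ring
  rw [← hcongr, key]
  rw [MeasureTheory.integral_const_mul]
  have : ∫ u in Ioi (0:ℝ), u ^ ((1:ℝ)/2) * Real.exp (-(b * u))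
      = (1 / b) ^ ((3:ℝ)/2) * Real.Gamma (3/2) := by
    have := integral_rpow_mul_exp_neg_mul_Ioi (a := (3:ℝ)/2) (r := b) (by norm_num) hb
    simpa [show (3:ℝ)/2 - 1 = 1/2 by norm_num] using this
  rw [this]
  have hGamma : Real.Gamma (3/2) = Real.sqrt π / 2 := by
    have h12 : (3:ℝ)/2 = 1/2 + 1 := by norm_num
    rw [h12, Real.Gamma_add_one (by norm_num), Real.Gamma_one_half_eq]
    ring
  rw [hGamma]
  ring

/-- The expected norm of a 2D standard-ish Gaussian: Rayleigh mean. -/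
lemma integral_norm_prod_gaussian (hv : v ≠ 0) :
    ∫ p : ℝ × ℝ, Real.sqrt (p.1 ^ 2 + p.2 ^ 2)
        ∂((gaussianReal 0 v).prod (gaussianReal 0 v))
      = Real.sqrt (π * v / 2) := by
  have hvpos : 0 < (v:ℝ) := by positivity
  have hb : 0 < (2 * (v:ℝ))⁻¹ := by positivity
  set b : ℝ := (2 * (v:ℝ))⁻¹ with hbdef
  set f : ℝ × ℝ → ℝ := fun p => Real.sqrt (p.1 ^ 2 + p.2 ^ 2) with hfdef
  set ρ : ℝ → ℝ := gaussianPDFReal 0 v with hρdef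
  -- step 1 : to the Lebesgue product integral
  have step1 : ∫ p, f p ∂((gaussianReal 0 v).prod (gaussianReal 0 v))
      = ∫ p : ℝ × ℝ, ρ p.1 * (ρ p.2 * f p) ∂(volume.prod volume) := by
    rw [MeasureTheory.integral_prod f (integrable_norm_prod hv)]
    have inner : ∀ x : ℝ, ∫ y, f (x, y) ∂(gaussianReal 0 v) = ∫ y, ρ y * f (x, y) :=
      fun x => integral_gauss_eq hv _
    simp_rw [inner]
    rw [integral_gauss_eq hv]
    have pull : ∀ x : ℝ, ρ x * ∫ y, ρ y * f (x, y) = ∫ y, ρ x * (ρ y * f (x, y)) :=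
      fun x => (MeasureTheory.integral_const_mul _ _).symm
    simp_rw [← hρdef, pull]
    exact MeasureTheory.integral_integral (by exact integrable_g hv)
  rw [step1]
  -- step 2 : polar coordinates
  have step2 : ∫ p : ℝ × ℝ, ρ p.1 * (ρ p.2 * f p) ∂(volume.prod volume)
      = ∫ p in polarCoord.target,
          (2 * π * (v:ℝ))⁻¹ * (p.1 ^ 2 * Real.exp (-(b * p.1 ^ 2))) := by
    rw [← Measure.volume_eq_prod, ← integral_comp_polarCoord_symm]
    apply setIntegral_congr_fun polarCoord.open_target.measurableSet
    intro p hp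
    have hr : 0 < p.1 := hp.1
    dsimp only
    rw [polarCoord_symm_apply]
    simp only [hρdef, hfdef]
    have hsum : (p.1 * Real.cos p.2) ^ 2 + (p.1 * Real.sin p.2) ^ 2 = p.1 ^ 2 := by
      rw [mul_pow, mul_pow, ← mul_add]
      rw [show Real.cos p.2 ^ 2 + Real.sin p.2 ^ 2 = 1 from Real.cos_sq_add_sin_sq p.2]
      ring
    rw [pdf_eq, pdf_eq]
    rw [smul_eq_mul]
    have hsqrt : Real.sqrt ((p.1 * Real.cos p.2) ^ 2 + (p.1 * Real.sin p.2) ^ 2) = p.1 := by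
      rw [hsum, Real.sqrt_sq hr.le]
    rw [hsqrt]
    have hexp : Real.exp (-(b * (p.1 * Real.cos p.2) ^ 2))
        * Real.exp (-(b * (p.1 * Real.sin p.2) ^ 2)) = Real.exp (-(b * p.1 ^ 2)) := by
      rw [← Real.exp_add]
      congr 1
      rw [← neg_add, ← mul_add, hsum]
    have hCC : (Real.sqrt (2 * π * (v:ℝ)))⁻¹ * (Real.sqrt (2 * π * (v:ℝ)))⁻¹
        = (2 * π * (v:ℝ))⁻¹ := by
      rw [← mul_inv, Real.mul_self_sqrt (by positivity)]
    calc p.1 * ((Real.sqrt (2 * π * (v:ℝ)))⁻¹ * Real.exp (-(b * (p.1 * Real.cos p.2) ^ 2))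
          * ((Real.sqrt (2 * π * (v:ℝ)))⁻¹ * Real.exp (-(b * (p.1 * Real.sin p.2) ^ 2)) * p.1))
        = ((Real.sqrt (2 * π * (v:ℝ)))⁻¹ * (Real.sqrt (2 * π * (v:ℝ)))⁻¹)
          * (p.1 ^ 2 * (Real.exp (-(b * (p.1 * Real.cos p.2) ^ 2))
            * Real.exp (-(b * (p.1 * Real.sin p.2) ^ 2)))) := by ring
      _ = (2 * π * (v:ℝ))⁻¹ * (p.1 ^ 2 * Real.exp (-(b * p.1 ^ 2))) := by rw [hCC, hexp]
  rw [step2]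
  -- step 3 : separate the two variables
  have htarget : polarCoord.target = Ioi (0:ℝ) ×ˢ Ioo (-π) π := rfl
  have step3 : ∫ p in polarCoord.target,
        (2 * π * (v:ℝ))⁻¹ * (p.1 ^ 2 * Real.exp (-(b * p.1 ^ 2)))
      = (∫ r in Ioi (0:ℝ), (2 * π * (v:ℝ))⁻¹ * (r ^ 2 * Real.exp (-(b * r ^ 2))))
        * ∫ θ in Ioo (-π) π, (1:ℝ) := by
    rw [htarget]
    rw [show ((volume : Measure (ℝ × ℝ)).restrict (Ioi (0:ℝ) ×ˢ Ioo (-π) π))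
        = ((volume.restrict (Ioi (0:ℝ))).prod (volume.restrict (Ioo (-π) π))) by
      rw [Measure.prod_restrict, ← Measure.volume_eq_prod]]
    rw [← MeasureTheory.integral_prod_mul
      (fun r => (2 * π * (v:ℝ))⁻¹ * (r ^ 2 * Real.exp (-(b * r ^ 2)))) (fun _ => (1:ℝ))]
    simp
  rw [step3]
  rw [MeasureTheory.integral_const_mul, radial_integral hb]
  rw [setIntegral_const, Real.volume_real_Ioo_of_le (by linarith [Real.pi_pos] : -π ≤ π),
    smul_eq_mul, mul_one]
  -- final algebra
  have hib : 1 / b = 2 * (v:ℝ) := by rw [hbdef, one_div, inv_inv]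
  rw [hib]
  have h32 : (2 * (v:ℝ)) ^ ((3:ℝ)/2) = (2 * (v:ℝ)) * Real.sqrt (2 * (v:ℝ)) := by
    rw [show (3:ℝ)/2 = 1 + 1/2 by norm_num, Real.rpow_add (by positivity), Real.rpow_one,
      ← Real.sqrt_eq_rpow]
  rw [h32]
  have hfinal : (2 * π * (v:ℝ))⁻¹ * (1 / 2 * (2 * (v:ℝ) * Real.sqrt (2 * (v:ℝ)))
      * (Real.sqrt π / 2)) * (π - -π) = Real.sqrt π * Real.sqrt (2 * (v:ℝ)) / 2 := by
    have hπ : π ≠ 0 := Real.pi_ne_zero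
    field_simp
    ring
  rw [hfinal]
  rw [← Real.sqrt_mul Real.pi_pos.le]
  rw [show π * (2 * (v:ℝ)) = (π * (v:ℝ) / 2) * 4 by ring,
    Real.sqrt_mul (by positivity), show (4:ℝ) = 2 ^ 2 by norm_num,
    Real.sqrt_sq (by norm_num : (0:ℝ) ≤ 2)]
  ring


end RoundTripAux

open RoundTripAux
open scoped ENNReal NNReal

theorem round_trip_expected_path_length
    {Ω : Type*} [MeasurableSpace Ω] (P : Measure Ω) [IsProbabilityMeasure P]
    (W₁ W₂ : ℝ → Ω → ℝ) (hW₁ : IsStdBrownian P W₁) (hW₂ : IsStdBrownian P W₂)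
    (hWindep : IndepFun (fun ω t => W₁ t ω) (fun ω t => W₂ t ω) P)
    (T : ℝ) (hT : 0 < T) (σm : ℝ) (hσm : 0 < σm)
    (X Y : ℝ → Ω → ℝ)
    (hX : ∀ t ω, X t ω = W₁ t ω - (t / T) * W₁ T ω)
    (hY : ∀ t ω, Y t ω = W₂ t ω - (t / T) * W₂ T ω)
    (Z : ℝ → Ω → ℝ × ℝ)
    (hZ : ∀ t ω, Z t ω = (σm * X t ω, σm * Y t ω))
    (n : ℕ) (hn : 2 ≤ n) :
    ∫ ω, (∑ k ∈ Finset.range n,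
        Real.sqrt (((Z ((k + 1 : ℕ) * T / n) ω).1 - (Z (k * T / n) ω).1)^2
                 + ((Z ((k + 1 : ℕ) * T / n) ω).2 - (Z (k * T / n) ω).2)^2)) ∂P
      = σm * Real.sqrt (π / 2 * (T * (n - 1))) := by
  have hn0 : (0:ℝ) < (n:ℝ) := by
    have : 0 < n := by omega
    exact_mod_cast this
  have hn1 : (1:ℝ) ≤ (n:ℝ) - 1 := by
    have : (2:ℝ) ≤ (n:ℝ) := by exact_mod_cast hn
    linarith
  set w : ℝ := T * ((n:ℝ) - 1) / (n:ℝ)^2 with hw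
  have hwpos : 0 < w := by
    apply div_pos (mul_pos hT (by linarith)) (by positivity)
  set vnn : ℝ≥0 := w.toNNReal with hvnn_def
  have hvnn : vnn ≠ 0 := by
    simp only [hvnn_def, ne_eq, Real.toNNReal_eq_zero, not_le]
    exact hwpos
  have hvnncoe : (vnn : ℝ) = w := Real.coe_toNNReal w hwpos.le
  -- the key per-term fact
  have H : ∀ k ∈ Finset.range n,
      (∫ ω, Real.sqrt (((Z ((k + 1 : ℕ) * T / n) ω).1 - (Z (k * T / n) ω).1)^2
                 + ((Z ((k + 1 : ℕ) * T / n) ω).2 - (Z (k * T / n) ω).2)^2) ∂P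
        = σm * Real.sqrt (π * w / 2))
      ∧ Integrable (fun ω => Real.sqrt (((Z ((k + 1 : ℕ) * T / n) ω).1 - (Z (k * T / n) ω).1)^2
                 + ((Z ((k + 1 : ℕ) * T / n) ω).2 - (Z (k * T / n) ω).2)^2)) P := by
    intro k hk
    have hkn : k < n := Finset.mem_range.mp hk
    set s : ℝ := (k : ℝ) * T / (n : ℝ) with hs_def
    set t : ℝ := ((k + 1 : ℕ) : ℝ) * T / (n : ℝ) with ht_def
    have hs : 0 ≤ s := by positivity
    have hst : s ≤ t := by
      rw [hs_def, ht_def, div_le_div_iff_of_pos_right hn0]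
      push_cast
      nlinarith [hT.le]
    have htT : t ≤ T := by
      rw [ht_def, div_le_iff₀ hn0]
      have : ((k + 1 : ℕ) : ℝ) ≤ (n : ℝ) := by exact_mod_cast hkn
      nlinarith
    have hts : t - s = T / (n:ℝ) := by
      rw [ht_def, hs_def]
      push_cast
      field_simp
      ring
    have hvar : (t - s) * (T - (t - s)) / T = w := by
      rw [hts, hw]
      field_simp
    -- the two increments
    set D₁ : Ω → ℝ := fun ω => (W₁ t ω - W₁ s ω) - ((t - s) / T) * W₁ T ω with hD₁
    set D₂ : Ω → ℝ := fun ω => (W₂ t ω - W₂ s ω) - ((t - s) / T) * W₂ T ω with hD₂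
    have hD₁m : Measurable D₁ := ((hW₁.1 t).sub (hW₁.1 s)).sub ((hW₁.1 T).const_mul _)
    have hD₂m : Measurable D₂ := ((hW₂.1 t).sub (hW₂.1 s)).sub ((hW₂.1 T).const_mul _)
    have hlaw1 : Measure.map D₁ P = gaussianReal 0 vnn := by
      rw [hD₁, law_bridge_incr P hW₁ hT hs hst htT, hvar]
    have hlaw2 : Measure.map D₂ P = gaussianReal 0 vnn := by
      rw [hD₂, law_bridge_incr P hW₂ hT hs hst htT, hvar]
    have hDind : IndepFun D₁ D₂ P := by
      have hφ : Measurable (fun f : ℝ → ℝ => (f t - f s) - ((t - s) / T) * f T) :=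
        ((measurable_pi_apply t).sub (measurable_pi_apply s)).sub
          ((measurable_pi_apply T).const_mul _)
      exact hWindep.comp hφ hφ
    have hpairm : Measurable (fun ω => (D₁ ω, D₂ ω)) := hD₁m.prodMk hD₂m
    have hpair : Measure.map (fun ω => (D₁ ω, D₂ ω)) P
        = (gaussianReal 0 vnn).prod (gaussianReal 0 vnn) := by
      rw [(indepFun_iff_map_prod_eq_prod_map_map hD₁m.aemeasurable hD₂m.aemeasurable).mp hDind,
        hlaw1, hlaw2]
    have hfc : Continuous (fun p : ℝ × ℝ => Real.sqrt (p.1 ^ 2 + p.2 ^ 2)) :=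
      Real.continuous_sqrt.comp (by fun_prop)
    -- rewriting the integrand
    have hfun : (fun ω => Real.sqrt (((Z ((k + 1 : ℕ) * T / n) ω).1 - (Z (k * T / n) ω).1)^2
                 + ((Z ((k + 1 : ℕ) * T / n) ω).2 - (Z (k * T / n) ω).2)^2))
        = fun ω => σm * Real.sqrt ((D₁ ω) ^ 2 + (D₂ ω) ^ 2) := by
      funext ω
      rw [hZ, hZ]
      simp only
      rw [hX, hX, hY, hY]
      have e1 : σm * (W₁ (((k + 1 : ℕ) : ℝ) * T / (n:ℝ)) ω
            - ((((k + 1 : ℕ) : ℝ) * T / (n:ℝ)) / T) * W₁ T ω)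
          - σm * (W₁ ((k : ℝ) * T / (n:ℝ)) ω - (((k : ℝ) * T / (n:ℝ)) / T) * W₁ T ω)
          = σm * D₁ ω := by
        rw [hD₁, ht_def, hs_def]
        ring
      have e2 : σm * (W₂ (((k + 1 : ℕ) : ℝ) * T / (n:ℝ)) ω
            - ((((k + 1 : ℕ) : ℝ) * T / (n:ℝ)) / T) * W₂ T ω)
          - σm * (W₂ ((k : ℝ) * T / (n:ℝ)) ω - (((k : ℝ) * T / (n:ℝ)) / T) * W₂ T ω)
          = σm * D₂ ω := by
        rw [hD₂, ht_def, hs_def]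
        ring
      rw [e1, e2, mul_pow, mul_pow, ← mul_add, Real.sqrt_mul (sq_nonneg σm),
        Real.sqrt_sq hσm.le]
    constructor
    · rw [hfun]
      rw [MeasureTheory.integral_const_mul]
      have : ∫ ω, Real.sqrt ((D₁ ω) ^ 2 + (D₂ ω) ^ 2) ∂P
          = ∫ p : ℝ × ℝ, Real.sqrt (p.1 ^ 2 + p.2 ^ 2)
              ∂(Measure.map (fun ω => (D₁ ω, D₂ ω)) P) := by
        rw [MeasureTheory.integral_map hpairm.aemeasurable hfc.aestronglyMeasurable]
      rw [this, hpair, integral_norm_prod_gaussian hvnn, hvnncoe]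
    · rw [hfun]
      apply Integrable.const_mul
      have : Integrable (fun p : ℝ × ℝ => Real.sqrt (p.1 ^ 2 + p.2 ^ 2))
          (Measure.map (fun ω => (D₁ ω, D₂ ω)) P) := by
        rw [hpair]
        exact integrable_norm_prod hvnn
      exact (integrable_map_measure hfc.aestronglyMeasurable hpairm.aemeasurable).mp this
  rw [MeasureTheory.integral_finset_sum _ (fun k hk => (H k hk).2)]
  rw [Finset.sum_congr rfl (fun k hk => (H k hk).1), Finset.sum_const, Finset.card_range,
    nsmul_eq_mul]
  -- final algebra
  have hsq : Real.sqrt (π * w / 2) = Real.sqrt (π / 2 * (T * ((n:ℝ) - 1))) / (n : ℝ) := by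
    rw [hw]
    rw [show π * (T * ((n:ℝ) - 1) / (n:ℝ)^2) / 2 = (π / 2 * (T * ((n:ℝ) - 1))) / (n:ℝ)^2 by
      field_simp]
    rw [Real.sqrt_div (by positivity : (0:ℝ) ≤ π / 2 * (T * ((n:ℝ) - 1))),
      Real.sqrt_sq hn0.le]
  rw [hsq]
  field_simp
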